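/- Let f : 𝔻² → 𝔻 be holomorphic and suppose f(ζ, ζ) = ζ for all ζ ∈ 𝔻. Then the diagonal {(ζ, ζ) : ζ ∈ 𝔻} is contained in the extreme set X(f); that is, for every ζ ∈ 𝔻, 1 − |f(ζ,ζ)|² = (1 − |ζ|²)|f₁(ζ,ζ)| + (1 − |ζ|²)|f₂(ζ,ζ)|. -/

import Mathlib

open Complex Metric Set

/-- The open unit bidisk in `ℂ²`. -/
def bidisk : Set (ℂ × ℂ) := {p | ‖p.1‖ < 1 ∧ ‖p.2‖ < 1}

/-- The Möbius map `ζ ↦ λ (ζ - a) / (1 - conj a ⬝ ζ)`. -/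
noncomputable def mobius (l a : ℂ) (z : ℂ) : ℂ :=
  l * (z - a) / (1 - (starRingEnd ℂ) a * z)

/-- `φ` is an automorphism of the unit disk: on the disk it agrees with a Möbius map
`ζ ↦ λ (ζ - a)/(1 - conj a ⬝ ζ)` with `|λ| = 1` and `|a| < 1`. -/
def IsDiskAut (φ : ℂ → ℂ) : Prop :=
  ∃ l a : ℂ, ‖l‖ = 1 ∧ ‖a‖ < 1 ∧ ∀ z : ℂ, ‖z‖ < 1 → φ z = mobius l a z

/-- A balanced disk in the bidisk: the image of the unit disk under `ζ ↦ (φ₁ ζ, φ₂ ζ)` for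
automorphisms `φ₁, φ₂` of the disk. -/
def IsBalancedDisk (D : Set (ℂ × ℂ)) : Prop :=
  ∃ φ₁ φ₂ : ℂ → ℂ, IsDiskAut φ₁ ∧ IsDiskAut φ₂ ∧
    D = {p : ℂ × ℂ | ∃ ζ : ℂ, ‖ζ‖ < 1 ∧ p = (φ₁ ζ, φ₂ ζ)}

/-- An extreme disk for `f`: a balanced disk on which the restriction of `f` is an
automorphism of the disk. -/
def IsExtremeDisk (f : ℂ × ℂ → ℂ) (D : Set (ℂ × ℂ)) : Prop :=
  ∃ φ₁ φ₂ : ℂ → ℂ, IsDiskAut φ₁ ∧ IsDiskAut φ₂ ∧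
    D = {p : ℂ × ℂ | ∃ ζ : ℂ, ‖ζ‖ < 1 ∧ p = (φ₁ ζ, φ₂ ζ)} ∧
    IsDiskAut (fun ζ => f (φ₁ ζ, φ₂ ζ))

/-- The extreme set `X(f)` of `f : 𝔻² → 𝔻`: the points of the bidisk at which
`1 - |f(z,w)|² = (1 - |z|²)|f₁(z,w)| + (1 - |w|²)|f₂(z,w)|`. -/
def extremeSet (f : ℂ × ℂ → ℂ) : Set (ℂ × ℂ) :=
  {p ∈ bidisk | 1 - ‖f p‖ ^ 2 =
    (1 - ‖p.1‖ ^ 2) * ‖fderiv ℂ f p (1, 0)‖ + (1 - ‖p.2‖ ^ 2) * ‖fderiv ℂ f p (0, 1)‖}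


lemma key_lt {a z : ℂ} (ha : ‖a‖ < 1) (hz : ‖z‖ < 1) :
    ‖z - a‖ < ‖1 - (starRingEnd ℂ) a * z‖ := by
  have h : Complex.normSq (1 - (starRingEnd ℂ) a * z) - Complex.normSq (z - a)
      = (1 - Complex.normSq a) * (1 - Complex.normSq z) := by
    simp only [Complex.normSq_apply, Complex.sub_re, Complex.sub_im, Complex.mul_re,
      Complex.mul_im, Complex.conj_re, Complex.conj_im, Complex.one_re, Complex.one_im]
    ring
  have na : Complex.normSq a = ‖a‖ ^ 2 := by rw [← Complex.sq_norm]
  have nz : Complex.normSq z = ‖z‖ ^ 2 := by rw [← Complex.sq_norm]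
  have h2 : ‖z - a‖ ^ 2 < ‖1 - (starRingEnd ℂ) a * z‖ ^ 2 := by
    have e1 : ‖z - a‖ ^ 2 = Complex.normSq (z - a) := by
      rw [← Complex.sq_norm]
    have e2 : ‖1 - (starRingEnd ℂ) a * z‖ ^ 2 = Complex.normSq (1 - (starRingEnd ℂ) a * z) := by
      rw [← Complex.sq_norm]
    rw [e1, e2]
    have pa : Complex.normSq a < 1 := by nlinarith [norm_nonneg a]
    have pz : Complex.normSq z < 1 := by nlinarith [norm_nonneg z]
    nlinarith [mul_pos (sub_pos.mpr pa) (sub_pos.mpr pz)]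
  exact lt_of_pow_lt_pow_left₀ 2 (norm_nonneg _) h2

lemma one_sub_ne {a z : ℂ} (ha : ‖a‖ < 1) (hz : ‖z‖ < 1) :
    (1 : ℂ) - (starRingEnd ℂ) a * z ≠ 0 := by
  intro h
  have := key_lt ha hz
  rw [h, norm_zero] at this
  exact absurd this (not_lt.mpr (norm_nonneg _))

/-- If a holomorphic `f : 𝔻² → 𝔻` satisfies `f(ζ,ζ) = ζ` on the disk, then the diagonal is
contained in the extreme set `X(f)`. -/
theorem diagonal_subset_extremeSet (f : ℂ × ℂ → ℂ)
    (hf : DifferentiableOn ℂ f bidisk) (hmap : ∀ p ∈ bidisk, ‖f p‖ < 1)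
    (hdiag : ∀ ζ : ℂ, ‖ζ‖ < 1 → f (ζ, ζ) = ζ) :
    ∀ ζ : ℂ, ‖ζ‖ < 1 →
      1 - ‖f (ζ, ζ)‖ ^ 2 =
        (1 - ‖ζ‖ ^ 2) * ‖fderiv ℂ f (ζ, ζ) (1, 0)‖ +
        (1 - ‖ζ‖ ^ 2) * ‖fderiv ℂ f (ζ, ζ) (0, 1)‖ := by
  intro ζ hζ
  have hopen : IsOpen bidisk := by
    have : bidisk = {p : ℂ × ℂ | ‖p.1‖ < 1} ∩ {p | ‖p.2‖ < 1} := rfl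
    rw [this]
    exact (isOpen_lt continuous_fst.norm continuous_const).inter
      (isOpen_lt continuous_snd.norm continuous_const)
  have hmem : ((ζ, ζ) : ℂ × ℂ) ∈ bidisk := ⟨hζ, hζ⟩
  set L := fderiv ℂ f (ζ, ζ) with hLdef
  have hfd : HasFDerivAt f L (ζ, ζ) :=
    (hf.differentiableAt (hopen.mem_nhds hmem)).hasFDerivAt
  set f₁ := L (1, 0) with hf1
  set f₂ := L (0, 1) with hf2
  -- Step 1 : f₁ + f₂ = 1
  have hζb : ζ ∈ ball (0:ℂ) 1 := by simpa [mem_ball_zero_iff] using hζ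
  have hsum1 : f₁ + f₂ = 1 := by
    have hpairD : HasDerivAt (fun l : ℂ => ((l, l) : ℂ × ℂ)) (1, 1) ζ :=
      (hasDerivAt_id ζ).prodMk (hasDerivAt_id ζ)
    have hdiagd : HasDerivAt (fun l : ℂ => f (l, l)) (L (1, 1)) ζ :=
      HasFDerivAt.comp_hasDerivAt (f := fun l : ℂ => ((l, l) : ℂ × ℂ)) ζ hfd hpairD
    have hev : (fun l : ℂ => f (l, l)) =ᶠ[nhds ζ] id := by
      filter_upwards [isOpen_ball.eventually_mem hζb] with l hl
      exact hdiag l (by simpa [mem_ball_zero_iff] using hl)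
    have hid : HasDerivAt (fun l : ℂ => f (l, l)) 1 ζ :=
      (hasDerivAt_id ζ).congr_of_eventuallyEq hev
    have h11 : L (1, 1) = 1 := hdiagd.unique hid
    have : ((1:ℂ), (1:ℂ)) = ((1:ℂ), (0:ℂ)) + ((0:ℂ), (1:ℂ)) := by simp
    rw [hf1, hf2, ← map_add, ← this, h11]
  -- Möbius setup
  set c : ℂ := 1 - (starRingEnd ℂ) ζ * ζ with hcdef
  have hcne : c ≠ 0 := one_sub_ne hζ hζ
  set φ : ℂ → ℂ := fun l => (l + ζ) / (1 + (starRingEnd ℂ) ζ * l) with hφdef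
  have hden : ∀ l : ℂ, ‖l‖ < 1 → (1 : ℂ) + (starRingEnd ℂ) ζ * l ≠ 0 := by
    intro l hl
    have := one_sub_ne (a := -ζ) (z := l) (by simpa using hζ) hl
    simpa [sub_neg_eq_add] using this
  have hφmem : ∀ l : ℂ, ‖l‖ < 1 → ‖φ l‖ < 1 := by
    intro l hl
    have hk := key_lt (a := -ζ) (z := l) (by simpa using hζ) hl
    simp only [sub_neg_eq_add, map_neg, neg_mul, sub_neg_eq_add] at hk
    rw [hφdef]
    simp only
    rw [norm_div, div_lt_one (norm_pos_iff.mpr (hden l hl))]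
    exact hk
  have hφdiff : ∀ l : ℂ, ‖l‖ < 1 → DifferentiableAt ℂ φ l := by
    intro l hl
    exact (differentiableAt_id.add_const ζ).div
      ((differentiableAt_const _).add ((differentiableAt_const _).mul differentiableAt_id))
      (hden l hl)
  have hφ0 : HasDerivAt φ c 0 := by
    have h1 : HasDerivAt (fun l : ℂ => l + ζ) 1 0 := by
      simpa using (hasDerivAt_id (0:ℂ)).add_const ζ
    have h2 : HasDerivAt (fun l : ℂ => 1 + (starRingEnd ℂ) ζ * l) ((starRingEnd ℂ) ζ) 0 := by
      simpa using ((hasDerivAt_id (0:ℂ)).const_mul ((starRingEnd ℂ) ζ)).const_add 1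
    have := h1.div h2 (hden 0 (by norm_num))
    refine HasDerivAt.congr_deriv this ?_
    rw [hcdef]
    simp
    ring
  set m : ℂ → ℂ := fun w => (w - ζ) / (1 - (starRingEnd ℂ) ζ * w) with hmdef
  have hmdiff : ∀ w : ℂ, ‖w‖ < 1 → DifferentiableAt ℂ m w := by
    intro w hw
    exact (differentiableAt_id.sub_const ζ).div
      ((differentiableAt_const _).sub ((differentiableAt_const _).mul differentiableAt_id))
      (one_sub_ne hζ hw)
  have hmd : HasDerivAt m c⁻¹ ζ := by
    have h1 : HasDerivAt (fun w : ℂ => w - ζ) 1 ζ := by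
      simpa using (hasDerivAt_id ζ).sub_const ζ
    have h2 : HasDerivAt (fun w : ℂ => 1 - (starRingEnd ℂ) ζ * w) (-(starRingEnd ℂ) ζ) ζ := by
      simpa using ((hasDerivAt_id ζ).const_mul ((starRingEnd ℂ) ζ)).const_sub 1
    have := h1.div h2 (one_sub_ne hζ hζ)
    refine HasDerivAt.congr_deriv this (Eq.symm ?_)
    rw [hcdef]
    field_simp [one_sub_ne hζ hζ]
    ring
  have hmlt : ∀ w : ℂ, ‖w‖ < 1 → ‖m w‖ < 1 := by
    intro w hw
    rw [hmdef]
    simp only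
    rw [norm_div, div_lt_one (norm_pos_iff.mpr (one_sub_ne hζ hw))]
    exact key_lt hζ hw
  -- Step 2 : the Schwarz–Pick bound
  have hbound : ∀ μ : ℂ, ‖μ‖ = 1 → ‖f₁ + μ * f₂‖ ≤ 1 := by
    intro μ hμ
    set ψ : ℂ → ℂ := fun l => φ (μ * l) with hψdef
    set v : ℂ → ℂ := fun l => m (f (φ l, ψ l)) with hvdef
    have hμl : ∀ l : ℂ, ‖l‖ < 1 → ‖μ * l‖ < 1 := by
      intro l hl; rw [norm_mul, hμ, one_mul]; exact hl
    have hmemb : ∀ l : ℂ, ‖l‖ < 1 → (φ l, ψ l) ∈ bidisk := fun l hl =>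
      ⟨hφmem l hl, hφmem (μ * l) (hμl l hl)⟩
    have hdiffv : DifferentiableOn ℂ v (ball (0:ℂ) 1) := by
      intro l hl
      rw [mem_ball_zero_iff] at hl
      apply DifferentiableAt.differentiableWithinAt
      have dφ : DifferentiableAt ℂ φ l := hφdiff l hl
      have dψ : DifferentiableAt ℂ ψ l :=
        (hφdiff (μ * l) (hμl l hl)).comp l ((differentiableAt_const μ).mul differentiableAt_id)
      have df : DifferentiableAt ℂ f (φ l, ψ l) :=
        hf.differentiableAt (hopen.mem_nhds (hmemb l hl))
      exact (hmdiff _ (hmap _ (hmemb l hl))).comp l (df.comp l (dφ.prodMk dψ))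
    have hφ0v : φ 0 = ζ := by rw [hφdef]; simp
    have hψ0v : ψ 0 = ζ := by rw [hψdef]; simp only [mul_zero]; exact hφ0v
    have hv0 : v 0 = 0 := by
      rw [hvdef]; simp only [hφ0v, hψ0v, hdiag ζ hζ, hmdef]; simp
    have hmaps : MapsTo v (ball (0:ℂ) 1) (ball (v 0) 1) := by
      intro l hl
      rw [mem_ball_zero_iff] at hl
      rw [hv0, mem_ball_zero_iff]
      exact hmlt _ (hmap _ (hmemb l hl))
    -- derivative of v at 0
    have hψ0 : HasDerivAt ψ (c * μ) 0 := by
      have hmul : HasDerivAt (fun l : ℂ => μ * l) μ 0 := by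
        simpa using (hasDerivAt_id (0:ℂ)).const_mul μ
      have hφ0' : HasDerivAt φ c (μ * 0) := by rwa [mul_zero]
      exact hφ0'.comp 0 hmul
    have hpairD : HasDerivAt (fun l : ℂ => ((φ l, ψ l) : ℂ × ℂ)) (c, c * μ) 0 :=
      hφ0.prodMk hψ0
    have hfd' : HasFDerivAt f L (φ 0, ψ 0) := by rw [hφ0v, hψ0v]; exact hfd
    have hu : HasDerivAt (fun l : ℂ => f (φ l, ψ l)) (L (c, c * μ)) 0 :=
      hfd'.comp_hasDerivAt 0 hpairD
    have hmd' : HasDerivAt m c⁻¹ (f (φ 0, ψ 0)) := by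
      rw [hφ0v, hψ0v, hdiag ζ hζ]; exact hmd
    have hvD : HasDerivAt v (c⁻¹ * L (c, c * μ)) 0 := by
      exact hmd'.comp 0 hu
    have hLval : L (c, c * μ) = c * f₁ + (c * μ) * f₂ := by
      have : ((c, c * μ) : ℂ × ℂ) = c • ((1:ℂ), (0:ℂ)) + (c * μ) • ((0:ℂ), (1:ℂ)) := by
        simp [Prod.ext_iff]
      rw [this, map_add, map_smul, map_smul, smul_eq_mul, smul_eq_mul, hf1, hf2]
    have hderval : c⁻¹ * L (c, c * μ) = f₁ + μ * f₂ := by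
      rw [hLval]; field_simp
    have hS := Complex.norm_deriv_le_div_of_mapsTo_ball hdiffv (hmaps.mono_right ball_subset_closedBall) one_pos
    rw [hvD.deriv, hderval] at hS
    simpa using hS
  -- Step 3 : upper bound on ‖f₁‖ + ‖f₂‖
  have hub : ‖f₁‖ + ‖f₂‖ ≤ 1 := by
    by_cases h2 : f₂ = 0
    · have := hbound 1 (norm_one)
      simpa [h2] using this
    · by_cases h1 : f₁ = 0
      · have hμn : ‖(‖f₂‖ : ℂ) / f₂‖ = 1 := by
          rw [norm_div, Complex.norm_real, Real.norm_of_nonneg (norm_nonneg _),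
            div_self (norm_ne_zero_iff.mpr h2)]
        have := hbound _ hμn
        rw [h1] at this ⊢
        rw [zero_add, div_mul_cancel₀ _ h2] at this
        rw [Complex.norm_real, Real.norm_of_nonneg (norm_nonneg _)] at this
        simpa using this
      · set μ : ℂ := (f₁ * (‖f₂‖ : ℂ)) / ((‖f₁‖ : ℂ) * f₂) with hμdef
        have hn1 : (‖f₁‖ : ℂ) ≠ 0 := by
          simpa using (norm_ne_zero_iff.mpr h1)
        have hr1 : ‖f₁‖ ≠ 0 := norm_ne_zero_iff.mpr h1
        have hr2 : ‖f₂‖ ≠ 0 := norm_ne_zero_iff.mpr h2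
        have hμn : ‖μ‖ = 1 := by
          rw [hμdef, norm_div, norm_mul, norm_mul, Complex.norm_real, Complex.norm_real,
            Real.norm_of_nonneg (norm_nonneg _), Real.norm_of_nonneg (norm_nonneg _)]
          exact div_self (mul_ne_zero hr1 hr2)
        have ha1 : ((‖f₁‖ : ℝ) : ℂ) ≠ 0 := by
          simpa using (Complex.ofReal_ne_zero.mpr hr1)
        have hval : f₁ + μ * f₂ = f₁ * ((‖f₁‖ : ℂ) + (‖f₂‖ : ℂ)) / (‖f₁‖ : ℂ) := by
          rw [hμdef]; field_simp [hr1, h2]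
        have := hbound μ hμn
        rw [hval] at this
        rw [norm_div, norm_mul] at this
        rw [Complex.norm_real, Real.norm_of_nonneg (norm_nonneg _)] at this
        have hre : ‖((‖f₁‖ : ℂ) + (‖f₂‖ : ℂ))‖ = ‖f₁‖ + ‖f₂‖ := by
          rw [← Complex.ofReal_add, Complex.norm_real,
            Real.norm_of_nonneg (by positivity)]
        rw [hre] at this
        have hpos : (0:ℝ) < ‖f₁‖ := norm_pos_iff.mpr h1
        calc ‖f₁‖ + ‖f₂‖ = ‖f₁‖ * (‖f₁‖ + ‖f₂‖) / ‖f₁‖ := by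
              rw [mul_comm, mul_div_assoc, div_self hpos.ne', mul_one]
          _ ≤ 1 := this
  have hlb : 1 ≤ ‖f₁‖ + ‖f₂‖ := by
    calc (1:ℝ) = ‖f₁ + f₂‖ := by rw [hsum1, norm_one]
      _ ≤ ‖f₁‖ + ‖f₂‖ := norm_add_le _ _
  have hsum : ‖f₁‖ + ‖f₂‖ = 1 := le_antisymm hub hlb
  rw [hdiag ζ hζ]
  linear_combination (‖ζ‖ ^ 2 - 1) * hsum
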